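/- For any decision problem D = (S, S_T, P₀, n, i, A, T, u, F) satisfying the termination assumption, there exists λ ≥ 0 such that for all joint dependant policies π, π' ∈ Δ(A)^n with ‖π − π'‖₁ < 1, one has |E[u|π] − E[u|π']| ≤ λ · ‖π − π'‖₁ / (1 − ‖π − π'‖₁), where ‖π − π'‖₁ = Σ_{j=1}^n Σ_{a∈A} |π_j(a) − π'_j(a)|. -/

import Mathlib

open Filter Asymptotics Topology
open scoped ENNReal

/-- `π` is a probability distribution on the finite set `A`. -/
def IsDist {A : Type} [Fintype A] (π : A → ℝ) : Prop :=
  (∀ a, 0 ≤ π a) ∧ ∑ a, π a = 1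

/-- The point mass at `s`. -/
def unitMass {S : Type} [DecidableEq S] (s : S) : S → ℝ :=
  fun s' => if s' = s then 1 else 0

/-- A decision problem `(S, S_T, P₀, n, i, A, T, u, F)`. -/
structure DP (S A : Type) [Fintype S] [Fintype A] (n : ℕ) where
  isTerminal : S → Bool
  P0 : S → ℝ
  idx : S → Fin n
  tr : S → A → S → ℝ
  u : S → ℝ
  F : (A → ℝ) → Fin n → A → ℝ
  P0_nonneg : ∀ s, 0 ≤ P0 s
  P0_sum : ∑ s, P0 s = 1
  P0_term : ∀ s, isTerminal s = true → P0 s = 0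
  tr_nonneg : ∀ s a s', 0 ≤ tr s a s'
  tr_sum : ∀ s a, ∑ s', tr s a s' = 1
  F_dist : ∀ π, IsDist π → ∀ j, IsDist (F π j)

namespace DP

variable {S A : Type} [Fintype S] [Fintype A] {n : ℕ}

/-- Transition probabilities when acting according to a mixed policy `τ`. -/
def Tpol (D : DP S A n) (s : S) (τ : A → ℝ) (s' : S) : ℝ :=
  ∑ a, τ a * D.tr s a s'

/-- One-step transition matrix of the Markov chain induced by joint dependant policy `π`. -/
def step (D : DP S A n) (π : Fin n → A → ℝ) (s s' : S) : ℝ :=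
  D.Tpol s (π (D.idx s)) s'

/-- A history: a nonempty list of states, all nonterminal except the last one, terminal. -/
def isHistory (D : DP S A n) (l : List S) : Bool :=
  match l.getLast? with
  | none => false
  | some s => D.isTerminal s && l.dropLast.all fun s' => !D.isTerminal s'

end DP

/-- Product of one-step transition probabilities along a list of states. -/
def pathWeight {S : Type} (step : S → S → ℝ) : List S → ℝ
  | [] => 1
  | [_] => 1
  | s :: s' :: r => step s s' * pathWeight step (s' :: r)

namespace DP

variable {S A : Type} [Fintype S] [Fintype A] {n : ℕ}

/-- Expected value of `f` over histories, with initial state distribution `ρ` and joint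
dependant policy `π`. -/
noncomputable def lval (D : DP S A n) (ρ : S → ℝ) (π : Fin n → A → ℝ)
    (f : List S → ℝ) : ℝ :=
  ∑' l : List S,
    if D.isHistory l then ((l.head?.map ρ).getD 0) * pathWeight (D.step π) l * f l else 0

/-- The ex ante expected utility `E[u|π]` of joint dependant policy `π`, started from `ρ`. -/
noncomputable def EUj (D : DP S A n) (ρ : S → ℝ) (π : Fin n → A → ℝ) : ℝ :=
  D.lval ρ π fun l => (l.getLast?.map D.u).getD 0

/-- The ex ante expected utility `E[u|π₀]` of agent policy `π₀`. -/
noncomputable def exAnte (D : DP S A n) (π₀ : A → ℝ) : ℝ :=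
  D.EUj D.P0 (D.F π₀)

/-- `E^s[u|π₀]`, the expected utility starting deterministically from state `s`. -/
noncomputable def EUat [DecidableEq S] (D : DP S A n) (s : S) (π₀ : A → ℝ) : ℝ :=
  D.EUj (unitMass s) (D.F π₀)

/-- `E[#(s)|π₀]`, the expected number of visits to state `s` under agent policy `π₀`. -/
noncomputable def visits [DecidableEq S] (D : DP S A n) (π₀ : A → ℝ) (s : S) : ℝ :=
  D.lval D.P0 (D.F π₀) fun l => (l.count s : ℝ)

/-- Termination assumption: from every nonterminal state and under every joint dependant
policy, the chain almost surely reaches a terminal state. -/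
def Terminates [DecidableEq S] (D : DP S A n) : Prop :=
  ∀ s : S, D.isTerminal s = false → ∀ π : Fin n → A → ℝ, (∀ j, IsDist (π j)) →
    D.lval (unitMass s) π (fun _ => 1) = 1

end DP

/-- The directional derivative of `f` at `π₀` in direction `a` exists and is `≤ 0`. -/
def dirDerivLE {A : Type} [Fintype A] [DecidableEq A]
    (f : (A → ℝ) → ℝ) (π₀ : A → ℝ) (a : A) : Prop :=
  ∃ d : ℝ, d ≤ 0 ∧
    Tendsto (fun ε : ℝ => (f (π₀ + ε • (unitMass a - π₀)) - f π₀) / ε)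
      (𝓝[>] (0:ℝ)) (𝓝 d)

namespace S15

open Matrix Filter
set_option linter.unusedSectionVars false

variable {S A : Type} [Fintype S] [Fintype A] [DecidableEq S] {n : ℕ}

/-- The finset of lists over `S` of length at most `m`. -/
def lenLE (S : Type) [Fintype S] [DecidableEq S] : ℕ → Finset (List S)
  | 0 => {[]}
  | m+1 => {[]} ∪ Finset.univ.biUnion fun s => ((lenLE S m).image fun l => s :: l)

lemma mem_lenLE : ∀ {m : ℕ} {l : List S}, l ∈ lenLE S m ↔ l.length ≤ m
  | 0, l => by cases l <;> simp [lenLE]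
  | (m+1), l => by
    cases l with
    | nil => simp [lenLE]
    | cons a l =>
      simp [lenLE, Finset.mem_union, Finset.mem_biUnion, Finset.mem_image,
        @mem_lenLE m, Nat.succ_le_succ_iff]

lemma lenLE_mono : Monotone (lenLE S) := by
  apply monotone_nat_of_le_succ
  intro m l hl
  exact mem_lenLE.2 (le_trans (mem_lenLE.1 hl) (Nat.le_succ m))

variable {D : DP S A n} {π : Fin n → A → ℝ} {ρ : S → ℝ} {f : List S → ℝ}

noncomputable def gval (D : DP S A n) (π : Fin n → A → ℝ) (ρ : S → ℝ)
    (f : List S → ℝ) (l : List S) : ℝ :=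
  if D.isHistory l then ((l.head?.map ρ).getD 0) * pathWeight (D.step π) l * f l else 0

lemma lval_eq_tsum : D.lval ρ π f = ∑' l, gval D π ρ f l := rfl

noncomputable def Qm (D : DP S A n) (π : Fin n → A → ℝ) : Matrix S S ℝ :=
  Matrix.of fun s s' => if D.isTerminal s then 0 else D.step π s s'

noncomputable def vf (D : DP S A n) (f : List S → ℝ) : S → ℝ :=
  fun s => if D.isTerminal s then f [s] else 0

lemma isHistory_nil : D.isHistory ([] : List S) = false := rfl

lemma isHistory_singleton (s : S) : D.isHistory [s] = D.isTerminal s := by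
  simp [DP.isHistory]

lemma isHistory_cons_cons (a b : S) (r : List S) :
    D.isHistory (a :: b :: r) = (!D.isTerminal a && D.isHistory (b :: r)) := by
  obtain ⟨c, hc⟩ : ∃ c, (b :: r).getLast? = some c := by
    cases h : (b :: r).getLast? with
    | none => exact absurd (List.getLast?_eq_none_iff.mp h) (by simp)
    | some c => exact ⟨c, rfl⟩
  simp only [DP.isHistory, List.getLast?_cons_cons, hc]
  simp only [List.dropLast_cons₂, List.all_cons]
  cases D.isTerminal a <;> cases D.isTerminal c <;> simp

lemma gval_nil : gval D π ρ f [] = 0 := by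
  simp [gval, isHistory_nil]

lemma gval_singleton (s : S) : gval D π ρ f [s] = ρ s * vf D f s := by
  simp only [gval, isHistory_singleton, vf]
  cases h : D.isTerminal s <;> simp [pathWeight, mul_comm]

lemma sum_unitMass (s : S) (w : S → ℝ) : ∑ x, unitMass s x * w x = w s := by
  simp [unitMass, ite_mul, Finset.sum_ite_eq']

lemma gval_cons (hf : ∀ (a : S) l, l ≠ [] → f (a :: l) = f l) (s : S) (l : List S) :
    gval D π ρ f (s :: l) =
      ρ s * ∑ s', Qm D π s s' * gval D π (unitMass s') f l
      + (if l = [] then ρ s * vf D f s else 0) := by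
  cases l with
  | nil =>
    simp [gval_nil, gval_singleton]
  | cons b r =>
    rw [if_neg (by simp : ¬((b :: r : List S) = [])), add_zero]
    have hsum : ∑ s', Qm D π s s' * gval D π (unitMass s') f (b :: r)
        = Qm D π s b * (if D.isHistory (b :: r) then pathWeight (D.step π) (b :: r) * f (b :: r) else 0) := by
      rw [Finset.sum_eq_single b]
      · by_cases hh : D.isHistory (b :: r) <;>
          simp [gval, hh, unitMass]
      · intro s' _ hs'
        by_cases hh : D.isHistory (b :: r) <;>
          simp [gval, hh, unitMass, Ne.symm hs']
      · intro h; exact absurd (Finset.mem_univ b) h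
    rw [hsum]
    have hhist := isHistory_cons_cons (D := D) s b r
    by_cases ht : D.isTerminal s
    · have : D.isHistory (s :: b :: r) = false := by rw [hhist, ht]; simp
      simp [gval, this, Qm, ht]
    · have hQ : Qm D π s b = D.step π s b := by simp [Qm, ht]
      by_cases hh : D.isHistory (b :: r)
      · have : D.isHistory (s :: b :: r) = true := by
          rw [hhist]; simp [ht, hh]
        simp only [gval, this, if_pos rfl, hh, if_pos rfl, hQ]
        rw [hf s (b :: r) (by simp)]
        simp [pathWeight]
        ring
      · have : D.isHistory (s :: b :: r) = false := by
          rw [hhist]; simp [hh]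
        simp [gval, this, hh]

noncomputable def FT (D : DP S A n) (π : Fin n → A → ℝ) (ρ : S → ℝ)
    (f : List S → ℝ) (T : ℕ) : ℝ :=
  ∑ l ∈ lenLE S (T+1), gval D π ρ f l

lemma sum_lenLE_succ (g : List S → ℝ) (hnil : g [] = 0) (m : ℕ) :
    ∑ l ∈ lenLE S (m+1), g l = ∑ s : S, ∑ l ∈ lenLE S m, g (s :: l) := by
  rw [lenLE]
  rw [Finset.sum_union (by
    rw [Finset.disjoint_left]
    intro x hx hx'
    simp only [Finset.mem_singleton] at hx
    subst hx
    simp only [Finset.mem_biUnion, Finset.mem_image] at hx'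
    obtain ⟨s, _, l', _, h⟩ := hx'
    exact List.cons_ne_nil _ _ h)]
  rw [Finset.sum_biUnion (by
    intro x _ y _ hxy
    rw [Function.onFun, Finset.disjoint_left]
    intro c hc hc'
    simp only [Finset.mem_image] at hc hc'
    obtain ⟨l1, _, rfl⟩ := hc
    obtain ⟨l2, _, h⟩ := hc'
    exact hxy (List.cons.injEq .. ▸ h).1.symm)]
  simp only [Finset.sum_singleton, hnil, zero_add]
  refine Finset.sum_congr rfl fun s _ => ?_
  rw [Finset.sum_image]
  intro x _ y _ h
  exact (List.cons_injective h)

lemma FT_zero : FT D π ρ f 0 = ∑ s, ρ s * vf D f s := by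
  unfold FT
  rw [sum_lenLE_succ _ gval_nil]
  refine Finset.sum_congr rfl fun s _ => ?_
  simp [lenLE, gval_singleton]

lemma FT_succ (hf : ∀ (a : S) l, l ≠ [] → f (a :: l) = f l) (T : ℕ) :
    FT D π ρ f (T+1) = ∑ s, (ρ s * vf D f s
      + ρ s * ∑ s', Qm D π s s' * FT D π (unitMass s') f T) := by
  unfold FT
  rw [sum_lenLE_succ _ gval_nil]
  refine Finset.sum_congr rfl fun s _ => ?_
  calc ∑ l ∈ lenLE S (T+1), gval D π ρ f (s :: l)
      = ∑ l ∈ lenLE S (T+1), (ρ s * ∑ s', Qm D π s s' * gval D π (unitMass s') f l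
          + (if l = [] then ρ s * vf D f s else 0)) := by
        exact Finset.sum_congr rfl fun l _ => gval_cons hf s l
    _ = (∑ l ∈ lenLE S (T+1), ρ s * ∑ s', Qm D π s s' * gval D π (unitMass s') f l)
          + ∑ l ∈ lenLE S (T+1), (if l = [] then ρ s * vf D f s else 0) := by
        rw [Finset.sum_add_distrib]
    _ = ρ s * vf D f s + ρ s * ∑ s', Qm D π s s' * FT D π (unitMass s') f T := by
        rw [Finset.sum_ite_eq' (lenLE S (T+1)) ([] : List S) (fun _ => ρ s * vf D f s)]
        rw [if_pos (mem_lenLE.2 (by simp))]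
        rw [add_comm]
        congr 1
        rw [← Finset.mul_sum]
        congr 1
        rw [Finset.sum_comm]
        refine Finset.sum_congr rfl fun s' _ => ?_
        rw [← Finset.mul_sum]
        rfl

lemma FT_eq (hf : ∀ (a : S) l, l ≠ [] → f (a :: l) = f l) :
    ∀ (T : ℕ) (ρ : S → ℝ), FT D π ρ f T
      = ∑ s, ρ s * ((∑ t ∈ Finset.range (T+1), Qm D π ^ t) *ᵥ vf D f) s := by
  intro T
  induction T with
  | zero =>
    intro ρ
    rw [FT_zero]
    simp [Matrix.one_mulVec]
  | succ T ih =>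
    intro ρ
    rw [FT_succ hf]
    have hP : (∑ t ∈ Finset.range (T+2), Qm D π ^ t)
        = 1 + Qm D π * ∑ t ∈ Finset.range (T+1), Qm D π ^ t := by
      rw [Finset.sum_range_succ' (fun t => Qm D π ^ t) (T+1)]
      rw [Finset.mul_sum]
      simp only [pow_succ']
      rw [add_comm]
      rfl
    rw [hP]
    refine Finset.sum_congr rfl fun s _ => ?_
    rw [Matrix.add_mulVec, Matrix.one_mulVec]
    have : ∀ s', FT D π (unitMass s') f T
        = ((∑ t ∈ Finset.range (T+1), Qm D π ^ t) *ᵥ vf D f) s' := by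
      intro s'
      rw [ih (unitMass s')]
      exact sum_unitMass s' _
    simp only [this]
    have : ∑ s', Qm D π s s' * ((∑ t ∈ Finset.range (T+1), Qm D π ^ t) *ᵥ vf D f) s'
        = ((Qm D π * ∑ t ∈ Finset.range (T+1), Qm D π ^ t) *ᵥ vf D f) s := by
      rw [← Matrix.mulVec_mulVec]
      rfl
    rw [this]
    simp [mul_add]

lemma step_nonneg (hπ : ∀ j, IsDist (π j)) (s s' : S) : 0 ≤ D.step π s s' :=
  Finset.sum_nonneg fun a _ => mul_nonneg ((hπ (D.idx s)).1 a) (D.tr_nonneg s a s')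

lemma pathWeight_nonneg {st : S → S → ℝ} (hst : ∀ s s', 0 ≤ st s s') :
    ∀ l : List S, 0 ≤ pathWeight st l
  | [] => zero_le_one
  | [_] => zero_le_one
  | (s :: s' :: r) => mul_nonneg (hst s s') (pathWeight_nonneg hst (s' :: r))

lemma gval_nonneg (hπ : ∀ j, IsDist (π j)) (hρ : ∀ s, 0 ≤ ρ s) (hfn : ∀ l, 0 ≤ f l)
    (l : List S) : 0 ≤ gval D π ρ f l := by
  unfold gval
  split
  · refine mul_nonneg (mul_nonneg ?_ (pathWeight_nonneg (step_nonneg hπ) l)) (hfn l)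
    cases l with
    | nil => simp
    | cons a r => simpa using hρ a
  · exact le_refl 0
    
lemma gval_unit_term (s : S) (hs : D.isTerminal s = true) {l : List S} (hl : l ≠ [s]) :
    gval D π (unitMass s) f l = 0 := by
  unfold gval
  cases l with
  | nil => simp [isHistory_nil]
  | cons a r =>
    by_cases hh : D.isHistory (a :: r)
    · cases r with
      | nil =>
        have : a ≠ s := fun h => hl (by rw [h])
        simp [unitMass, this]
      | cons b r' =>
        by_cases has : a = s
        · subst has
          rw [isHistory_cons_cons] at hh
          simp [hs] at hh
        · simp [unitMass, has]
    · simp [hh]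

lemma summable_gval_one (hπ : ∀ j, IsDist (π j)) (hterm : D.Terminates) (s : S) :
    Summable (gval D π (unitMass s) (fun _ => 1)) := by
  by_cases hs : D.isTerminal s
  · exact summable_of_ne_finset_zero (s := ({[s]} : Finset (List S)))
      (fun l hl => gval_unit_term s hs (by simpa using hl))
  · by_contra h
    have h1 := hterm s (by simpa using hs) π hπ
    rw [lval_eq_tsum, tsum_eq_zero_of_not_summable h] at h1
    norm_num at h1

lemma summable_gval (hπ : ∀ j, IsDist (π j)) (hterm : D.Terminates)
    (ρ : S → ℝ) {C : ℝ} (hC : ∀ l, |f l| ≤ C) :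
    Summable (gval D π ρ f) := by
  have hC0 : 0 ≤ C := le_trans (abs_nonneg _) (hC [])
  refine Summable.of_norm_bounded
    (g := fun l => ∑ s, |ρ s| * C * gval D π (unitMass s) (fun _ => 1) l) ?_ ?_
  · exact summable_sum fun s _ =>
      ((summable_gval_one hπ hterm s).mul_left _)
  · intro l
    rw [Real.norm_eq_abs]
    by_cases hh : D.isHistory l
    · cases l with
      | nil => simp [isHistory_nil] at hh
      | cons a r =>
        have hpw := pathWeight_nonneg (step_nonneg (D := D) (π := π) hπ) (a :: r)
        have hrhs : ∀ s, gval D π (unitMass s) (fun _ => 1) (a :: r)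
            = (if a = s then 1 else 0) * pathWeight (D.step π) (a :: r) := by
          intro s
          simp [gval, hh, unitMass]
        have hsum : ∑ s, |ρ s| * C * gval D π (unitMass s) (fun _ => 1) (a :: r)
            = |ρ a| * C * pathWeight (D.step π) (a :: r) := by
          rw [Finset.sum_congr rfl fun s _ => by rw [hrhs s]]
          rw [Finset.sum_eq_single a]
          · simp
          · intro b _ hb
            simp [Ne.symm hb]
          · intro h; exact absurd (Finset.mem_univ a) h
        show _ ≤ ∑ s : S, |ρ s| * C * gval D π (unitMass s) (fun _ => 1) (a :: r)
        rw [hsum]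
        have hle : |gval D π ρ f (a :: r)| ≤ |ρ a| * pathWeight (D.step π) (a :: r) * C := by
          simp only [gval, if_pos hh, List.head?_cons, Option.map_some, Option.getD_some]
          rw [abs_mul, abs_mul, abs_of_nonneg hpw]
          exact mul_le_mul_of_nonneg_left (hC _) (by positivity)
        calc |gval D π ρ f (a :: r)| ≤ |ρ a| * pathWeight (D.step π) (a :: r) * C := hle
          _ = |ρ a| * C * pathWeight (D.step π) (a :: r) := by ring
    · rw [show gval D π ρ f l = 0 by simp [gval, hh], abs_zero]
      show (0:ℝ) ≤ ∑ s : S, |ρ s| * C * gval D π (unitMass s) (fun _ => 1) l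
      exact Finset.sum_nonneg fun s _ => by
        have := gval_nonneg (D := D) (π := π) (ρ := unitMass s) (f := fun _ => 1) hπ
          (fun x => by simp only [unitMass]; split <;> norm_num) (fun _ => zero_le_one) l
        positivity

lemma tendsto_FT (hsum : Summable (gval D π ρ f)) :
    Tendsto (fun T => FT D π ρ f T) atTop (𝓝 (D.lval ρ π f)) := by
  rw [lval_eq_tsum]
  have h := hsum.hasSum
  have hcof : Tendsto (fun T : ℕ => lenLE S (T+1)) atTop atTop :=
    Filter.tendsto_atTop_finset_of_monotone
      (fun T T' hT => lenLE_mono (by omega))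
      (fun l => ⟨l.length, mem_lenLE.2 (by omega)⟩)
  exact (h.comp hcof :)

lemma hf_one : ∀ (a : S) (l : List S), l ≠ [] → (fun _ : List S => (1:ℝ)) (a :: l) = (fun _ : List S => (1:ℝ)) l :=
  fun _ _ _ => rfl

lemma hf_last (u : S → ℝ) : ∀ (a : S) (l : List S), l ≠ [] →
    ((a :: l).getLast?.map u).getD 0 = (l.getLast?.map u).getD 0 := by
  intro a l hl
  cases l with
  | nil => exact absurd rfl hl
  | cons b r => rw [List.getLast?_cons_cons]

noncomputable def nrm (M : Matrix S S ℝ) : ℝ := ∑ s, ∑ s', |M s s'|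

lemma nrm_nonneg (M : Matrix S S ℝ) : 0 ≤ nrm M :=
  Finset.sum_nonneg fun _ _ => Finset.sum_nonneg fun _ _ => abs_nonneg _

lemma row_abs_le_nrm (M : Matrix S S ℝ) (s : S) : ∑ s', |M s s'| ≤ nrm M :=
  Finset.single_le_sum (f := fun s => ∑ s', |M s s'|)
    (fun _ _ => Finset.sum_nonneg fun _ _ => abs_nonneg _) (Finset.mem_univ s)

lemma nrm_one : nrm (1 : Matrix S S ℝ) = (Fintype.card S : ℝ) := by
  unfold nrm
  have : ∀ s : S, ∑ s', |(1 : Matrix S S ℝ) s s'| = 1 := by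
    intro s
    have : ∀ s' : S, |(1 : Matrix S S ℝ) s s'| = if s' = s then 1 else 0 := by
      intro s'
      simp [Matrix.one_apply, eq_comm]
      split <;> simp
    rw [Finset.sum_congr rfl fun s' _ => this s']
    simp
  rw [Finset.sum_congr rfl fun s _ => this s]
  simp [Finset.card_univ]

lemma one_le_nrm_one (hS : Nonempty S) : (1:ℝ) ≤ nrm (1 : Matrix S S ℝ) := by
  rw [nrm_one]
  exact_mod_cast Fintype.card_pos_iff.mpr hS

lemma nrm_mul_le (M N : Matrix S S ℝ) : nrm (M * N) ≤ nrm M * nrm N := by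
  unfold nrm
  calc ∑ s, ∑ s', |(M * N) s s'|
      ≤ ∑ s, ∑ s', ∑ k, |M s k| * |N k s'| := by
        refine Finset.sum_le_sum fun s _ => Finset.sum_le_sum fun s' _ => ?_
        rw [Matrix.mul_apply]
        refine le_trans (Finset.abs_sum_le_sum_abs _ _) ?_
        exact Finset.sum_le_sum fun k _ => le_of_eq (abs_mul _ _)
    _ = ∑ s, ∑ k, |M s k| * ∑ s', |N k s'| := by
        refine Finset.sum_congr rfl fun s _ => ?_
        rw [Finset.sum_comm]
        exact Finset.sum_congr rfl fun k _ => (Finset.mul_sum _ _ _).symm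
    _ ≤ ∑ s, ∑ k, |M s k| * (∑ k', ∑ s', |N k' s'|) := by
        refine Finset.sum_le_sum fun s _ => Finset.sum_le_sum fun k _ => ?_
        exact mul_le_mul_of_nonneg_left (row_abs_le_nrm N k) (abs_nonneg _)
    _ = (∑ s, ∑ k, |M s k|) * ∑ k', ∑ s', |N k' s'| := by
        rw [Finset.sum_mul]
        exact Finset.sum_congr rfl fun s _ => by rw [Finset.sum_mul]

lemma nrm_sum_le {ι : Type*} (t : Finset ι) (f : ι → Matrix S S ℝ) :
    nrm (∑ i ∈ t, f i) ≤ ∑ i ∈ t, nrm (f i) := by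
  unfold nrm
  calc ∑ s, ∑ s', |(∑ i ∈ t, f i) s s'|
      ≤ ∑ s, ∑ s', ∑ i ∈ t, |f i s s'| := by
        refine Finset.sum_le_sum fun s _ => Finset.sum_le_sum fun s' _ => ?_
        simp only [Matrix.sum_apply]
        exact Finset.abs_sum_le_sum_abs _ _
    _ = ∑ i ∈ t, ∑ s, ∑ s', |f i s s'| := by
        refine Eq.trans (Finset.sum_congr rfl fun s _ => Finset.sum_comm) ?_
        exact Finset.sum_comm

lemma nrm_pow_le (M : Matrix S S ℝ) {b : ℝ} (hb : 0 ≤ b) (h : nrm M ≤ b) (q : ℕ) :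
    nrm (M ^ q) ≤ b ^ q * nrm (1 : Matrix S S ℝ) := by
  induction q with
  | zero => simp
  | succ q ih =>
    rw [pow_succ']
    calc nrm (M * M ^ q) ≤ nrm M * nrm (M ^ q) := nrm_mul_le _ _
      _ ≤ b * (b ^ q * nrm (1 : Matrix S S ℝ)) := by
          refine mul_le_mul h ih (nrm_nonneg _) hb
      _ = b ^ (q+1) * nrm (1 : Matrix S S ℝ) := by ring

lemma abs_dot_mulVec (M : Matrix S S ℝ) (ρ w : S → ℝ) {R C : ℝ}
    (hρ : ∑ s, |ρ s| ≤ R) (hw : ∀ s, |w s| ≤ C) (hC : 0 ≤ C) :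
    |∑ s, ρ s * (M *ᵥ w) s| ≤ R * (nrm M * C) := by
  calc |∑ s, ρ s * (M *ᵥ w) s| ≤ ∑ s, |ρ s * (M *ᵥ w) s| := Finset.abs_sum_le_sum_abs _ _
    _ ≤ ∑ s, |ρ s| * (nrm M * C) := by
        refine Finset.sum_le_sum fun s _ => ?_
        rw [abs_mul]
        refine mul_le_mul_of_nonneg_left ?_ (abs_nonneg _)
        calc |(M *ᵥ w) s| ≤ ∑ s', |M s s' * w s'| := Finset.abs_sum_le_sum_abs _ _
          _ ≤ ∑ s', |M s s'| * C := by
              refine Finset.sum_le_sum fun s' _ => ?_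
              rw [abs_mul]
              exact mul_le_mul_of_nonneg_left (hw s') (abs_nonneg _)
          _ ≤ nrm M * C := by
              rw [← Finset.sum_mul]
              exact mul_le_mul_of_nonneg_right (row_abs_le_nrm M s) hC
    _ = (∑ s, |ρ s|) * (nrm M * C) := (Finset.sum_mul _ _ _).symm
    _ ≤ R * (nrm M * C) := by
        refine mul_le_mul_of_nonneg_right hρ ?_
        exact mul_nonneg (nrm_nonneg _) hC

lemma Qm_nonneg (hπ : ∀ j, IsDist (π j)) (s s' : S) : 0 ≤ Qm D π s s' := by
  unfold Qm
  simp only [Matrix.of_apply]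
  split
  · exact le_refl 0
  · exact step_nonneg hπ s s'

lemma Qm_pow_nonneg (hπ : ∀ j, IsDist (π j)) (t : ℕ) (s s' : S) :
    0 ≤ (Qm D π ^ t) s s' := by
  induction t generalizing s s' with
  | zero => simp [Matrix.one_apply]; split <;> norm_num
  | succ t ih =>
    rw [pow_succ', Matrix.mul_apply]
    exact Finset.sum_nonneg fun k _ => mul_nonneg (Qm_nonneg hπ s k) (ih k s')

lemma Qm_rowsum (hπ : ∀ j, IsDist (π j)) (s : S) :
    ∑ s', Qm D π s s' = if D.isTerminal s then 0 else 1 := by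
  unfold Qm
  by_cases h : D.isTerminal s
  · simp [h]
  · simp only [Matrix.of_apply, if_neg h]
    unfold DP.step DP.Tpol
    rw [Finset.sum_comm]
    calc ∑ a, ∑ s', π (D.idx s) a * D.tr s a s'
        = ∑ a, π (D.idx s) a := by
          refine Finset.sum_congr rfl fun a _ => ?_
          rw [← Finset.mul_sum, D.tr_sum s a, mul_one]
      _ = 1 := (hπ (D.idx s)).2

lemma nrm_Qm_le (hπ : ∀ j, IsDist (π j)) : nrm (Qm D π) ≤ (Fintype.card S : ℝ) := by
  unfold nrm
  calc ∑ s, ∑ s', |Qm D π s s'|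
      = ∑ s : S, ∑ s', Qm D π s s' := by
        refine Finset.sum_congr rfl fun s _ => Finset.sum_congr rfl fun s' _ => ?_
        exact abs_of_nonneg (Qm_nonneg hπ s s')
    _ ≤ ∑ s : S, 1 := by
        refine Finset.sum_le_sum fun s _ => ?_
        rw [Qm_rowsum hπ s]
        split <;> norm_num
    _ = (Fintype.card S : ℝ) := by simp [Finset.card_univ]

lemma Qm_pow_terminal (t : ℕ) {s : S} (hs : D.isTerminal s = true) (s' : S) :
    (Qm D π ^ (t+1)) s s' = 0 := by
  rw [pow_succ', Matrix.mul_apply]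
  refine Finset.sum_eq_zero fun k _ => ?_
  have : Qm D π s k = 0 := by simp [Qm, hs]
  rw [this, zero_mul]

lemma Qm_mulVec_one (hπ : ∀ j, IsDist (π j)) :
    Qm D π *ᵥ (fun _ => (1:ℝ)) = (fun _ => (1:ℝ)) - vf D (fun _ => (1:ℝ)) := by
  funext s
  simp only [Matrix.mulVec, dotProduct, mul_one, Pi.sub_apply, vf]
  rw [Qm_rowsum hπ s]
  split <;> norm_num

lemma Qm_pow_mulVec_one (hπ : ∀ j, IsDist (π j)) (T : ℕ) :
    (Qm D π ^ (T+1)) *ᵥ (fun _ => (1:ℝ))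
      = (fun _ => (1:ℝ)) - (∑ t ∈ Finset.range (T+1), Qm D π ^ t) *ᵥ vf D (fun _ => (1:ℝ)) := by
  induction T with
  | zero =>
    rw [pow_one, Qm_mulVec_one hπ]
    simp [Matrix.one_mulVec]
  | succ T ih =>
    have hp : Qm D π ^ (T+2) = Qm D π ^ (T+1) * Qm D π := pow_succ _ _
    have hsum : (∑ t ∈ Finset.range (T+1+1), Qm D π ^ t)
        = (∑ t ∈ Finset.range (T+1), Qm D π ^ t) + Qm D π ^ (T+1) := Finset.sum_range_succ _ _
    rw [show T+1+1 = T+2 from rfl] at hsum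
    rw [hp, ← Matrix.mulVec_mulVec, Qm_mulVec_one hπ, Matrix.mulVec_sub, ih, hsum,
      Matrix.add_mulVec]
    abel

lemma tendsto_nrm_pow (hπ : ∀ j, IsDist (π j)) (hterm : D.Terminates) :
    Tendsto (fun t => nrm (Qm D π ^ t)) atTop (𝓝 0) := by
  have key : ∀ s : S, Tendsto (fun t => ∑ s', |(Qm D π ^ t) s s'|) atTop (𝓝 0) := by
    intro s
    by_cases hs : D.isTerminal s
    · refine Tendsto.congr' ?_ tendsto_const_nhds
      filter_upwards [Filter.eventually_atTop.2 ⟨1, fun t ht => ht⟩] with t ht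
      obtain ⟨t', rfl⟩ : ∃ t', t = t' + 1 := ⟨t - 1, by omega⟩
      symm
      refine Finset.sum_eq_zero fun s' _ => ?_
      rw [Qm_pow_terminal t' hs s', abs_zero]
    · have heq : ∀ t : ℕ, ∑ s', |(Qm D π ^ t) s s'| = ((Qm D π ^ t) *ᵥ fun _ => (1:ℝ)) s := by
        intro t
        simp only [Matrix.mulVec, dotProduct, mul_one]
        exact Finset.sum_congr rfl fun s' _ => abs_of_nonneg (Qm_pow_nonneg hπ t s s')
      have hFT : Tendsto (fun T => FT D π (unitMass s) (fun _ => 1) T) atTop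
          (𝓝 (D.lval (unitMass s) π (fun _ => 1))) :=
        tendsto_FT (summable_gval_one hπ hterm s)
      rw [hterm s (by simpa using hs) π hπ] at hFT
      have hshift : Tendsto (fun T => ((Qm D π ^ (T+1)) *ᵥ fun _ => (1:ℝ)) s) atTop (𝓝 0) := by
        have hrw : ∀ T, ((Qm D π ^ (T+1)) *ᵥ fun _ => (1:ℝ)) s
            = 1 - FT D π (unitMass s) (fun _ => 1) T := by
          intro T
          rw [Qm_pow_mulVec_one hπ T]
          rw [FT_eq hf_one T (unitMass s), sum_unitMass]
          rfl
        simp only [hrw]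
        have := hFT.const_sub 1
        simpa using this
      have := (Filter.tendsto_add_atTop_iff_nat (f := fun t => ((Qm D π ^ t) *ᵥ fun _ => (1:ℝ)) s) 1).1 hshift
      exact Tendsto.congr (fun t => (heq t).symm) this
  have : Tendsto (fun t => ∑ s : S, ∑ s', |(Qm D π ^ t) s s'|) atTop (𝓝 (∑ s : S, 0)) :=
    tendsto_finset_sum _ fun s _ => key s
  simpa [nrm] using this

lemma nonempty_S (D : DP S A n) : Nonempty S := by
  by_contra h
  have hiso : IsEmpty S := not_nonempty_iff.mp h
  have := D.P0_sum
  rw [Finset.univ_eq_empty, Finset.sum_empty] at this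
  norm_num at this

lemma geo_div_sum {t1 : ℕ} (h1 : 1 ≤ t1) (T : ℕ) :
    ∑ t ∈ Finset.range T, ((1:ℝ)/2) ^ (t / t1) ≤ 2 * t1 := by
  have hinj : ∀ x ∈ Finset.range T, ∀ y ∈ Finset.range T,
      (fun t => (t / t1, t % t1)) x = (fun t => (t / t1, t % t1)) y → x = y := by
    intro x _ y _ hxy
    simp only [Prod.mk.injEq] at hxy
    have hx := Nat.div_add_mod x t1
    have hy := Nat.div_add_mod y t1
    rw [hxy.1, hxy.2] at hx
    omega
  have himg : ∑ t ∈ Finset.range T, ((1:ℝ)/2) ^ (t / t1)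
      = ∑ p ∈ (Finset.range T).image (fun t => (t / t1, t % t1)), ((1:ℝ)/2) ^ p.1 := by
    rw [Finset.sum_image hinj]
  rw [himg]
  have hsub : (Finset.range T).image (fun t => (t / t1, t % t1))
      ⊆ Finset.range T ×ˢ Finset.range t1 := by
    intro p hp
    simp only [Finset.mem_image, Finset.mem_range] at hp
    obtain ⟨t, ht, rfl⟩ := hp
    simp only [Finset.mem_product, Finset.mem_range]
    exact ⟨lt_of_le_of_lt (Nat.div_le_self t t1) ht, Nat.mod_lt t (by omega)⟩
  calc ∑ p ∈ (Finset.range T).image (fun t => (t / t1, t % t1)), ((1:ℝ)/2) ^ p.1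
      ≤ ∑ p ∈ Finset.range T ×ˢ Finset.range t1, ((1:ℝ)/2) ^ p.1 :=
        Finset.sum_le_sum_of_subset_of_nonneg hsub (fun p _ _ => by positivity)
    _ = ∑ q ∈ Finset.range T, ∑ _r ∈ Finset.range t1, ((1:ℝ)/2) ^ q := by
        rw [Finset.sum_product]
    _ = (t1 : ℝ) * ∑ q ∈ Finset.range T, ((1:ℝ)/2) ^ q := by
        rw [Finset.mul_sum]
        refine Finset.sum_congr rfl fun q _ => ?_
        rw [Finset.sum_const, Finset.card_range, nsmul_eq_mul]
    _ ≤ (t1 : ℝ) * 2 := by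
        refine mul_le_mul_of_nonneg_left (sum_geometric_two_le T) (by positivity)
    _ = 2 * t1 := by ring

lemma sum_nrm_pow_le (hS : Nonempty S) (hπ : ∀ j, IsDist (π j)) {t1 : ℕ} (h1 : 1 ≤ t1)
    (hh : nrm (Qm D π ^ t1) ≤ 1/2) (T : ℕ) :
    ∑ t ∈ Finset.range T, nrm (Qm D π ^ t)
      ≤ (Fintype.card S : ℝ) ^ (t1 + 2) * (2 * t1) := by
  set N : ℝ := (Fintype.card S : ℝ) with hN
  have hN1 : (1:ℝ) ≤ N := by
    rw [hN]
    exact_mod_cast Fintype.card_pos_iff.mpr hS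
  have hN0 : (0:ℝ) ≤ N := by linarith
  have hone : nrm (1 : Matrix S S ℝ) = N := nrm_one
  have key : ∀ t, nrm (Qm D π ^ t) ≤ ((1:ℝ)/2) ^ (t / t1) * N ^ (t1 + 2) := by
    intro t
    have hdm := Nat.div_add_mod t t1
    have hpow : Qm D π ^ t = (Qm D π ^ t1) ^ (t / t1) * Qm D π ^ (t % t1) := by
      rw [← pow_mul, ← pow_add, hdm]
    have hb1 : nrm ((Qm D π ^ t1) ^ (t / t1)) ≤ ((1:ℝ)/2) ^ (t / t1) * N := by
      have := nrm_pow_le (Qm D π ^ t1) (by norm_num : (0:ℝ) ≤ 1/2) hh (t / t1)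
      rwa [hone] at this
    have hb2 : nrm (Qm D π ^ (t % t1)) ≤ N ^ (t % t1) * N := by
      have := nrm_pow_le (Qm D π) hN0 (nrm_Qm_le hπ) (t % t1)
      rwa [hone] at this
    calc nrm (Qm D π ^ t) ≤ nrm ((Qm D π ^ t1) ^ (t / t1)) * nrm (Qm D π ^ (t % t1)) := by
          rw [hpow]; exact nrm_mul_le _ _
      _ ≤ (((1:ℝ)/2) ^ (t / t1) * N) * (N ^ (t % t1) * N) := by
          refine mul_le_mul hb1 hb2 (nrm_nonneg _) ?_
          positivity
      _ ≤ ((1:ℝ)/2) ^ (t / t1) * N ^ (t1 + 2) := by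
          have hmod : t % t1 ≤ t1 - 1 := by
            have := Nat.mod_lt t (show 0 < t1 by omega)
            omega
          have : N ^ (t % t1) ≤ N ^ t1 := pow_le_pow_right₀ hN1 (by omega)
          calc (((1:ℝ)/2) ^ (t / t1) * N) * (N ^ (t % t1) * N)
              = ((1:ℝ)/2) ^ (t / t1) * (N ^ (t % t1) * N ^ 2) := by ring
            _ ≤ ((1:ℝ)/2) ^ (t / t1) * (N ^ t1 * N ^ 2) := by
                refine mul_le_mul_of_nonneg_left ?_ (by positivity)
                refine mul_le_mul_of_nonneg_right this (by positivity)
            _ = ((1:ℝ)/2) ^ (t / t1) * N ^ (t1 + 2) := by rw [← pow_add]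
  calc ∑ t ∈ Finset.range T, nrm (Qm D π ^ t)
      ≤ ∑ t ∈ Finset.range T, ((1:ℝ)/2) ^ (t / t1) * N ^ (t1 + 2) :=
        Finset.sum_le_sum fun t _ => key t
    _ = (∑ t ∈ Finset.range T, ((1:ℝ)/2) ^ (t / t1)) * N ^ (t1 + 2) := by
        rw [Finset.sum_mul]
    _ ≤ (2 * t1) * N ^ (t1 + 2) := by
        refine mul_le_mul_of_nonneg_right (geo_div_sum h1 T) (by positivity)
    _ = N ^ (t1 + 2) * (2 * t1) := by ring

lemma continuous_Qm_entry (D : DP S A n) (s s' : S) :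
    Continuous fun π : Fin n → A → ℝ => Qm D π s s' := by
  unfold Qm
  simp only [Matrix.of_apply]
  by_cases h : D.isTerminal s
  · simp only [h, if_true]
    exact continuous_const
  · simp only [h, if_false]
    unfold DP.step DP.Tpol
    exact continuous_finset_sum _ fun a _ => by fun_prop

lemma continuous_Qm_pow_entry (D : DP S A n) (t : ℕ) (s s' : S) :
    Continuous fun π : Fin n → A → ℝ => (Qm D π ^ t) s s' := by
  induction t generalizing s s' with
  | zero => simp only [pow_zero]; exact continuous_const
  | succ t ih =>
    have : ∀ π : Fin n → A → ℝ, (Qm D π ^ (t+1)) s s'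
        = ∑ k, Qm D π s k * (Qm D π ^ t) k s' := by
      intro π
      rw [pow_succ', Matrix.mul_apply]
    simp only [this]
    exact continuous_finset_sum _ fun k _ => (continuous_Qm_entry D s k).mul (ih k s')

lemma continuous_nrm_pow (D : DP S A n) (t : ℕ) :
    Continuous fun π : Fin n → A → ℝ => nrm (Qm D π ^ t) := by
  unfold nrm
  exact continuous_finset_sum _ fun s _ =>
    continuous_finset_sum _ fun s' _ => (continuous_Qm_pow_entry D t s s').abs

lemma isCompact_K (n : ℕ) (A : Type) [Fintype A] :
    IsCompact {π : Fin n → A → ℝ | ∀ j, IsDist (π j)} := by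
  refine IsCompact.of_isClosed_subset
    (isCompact_univ_pi fun _ => isCompact_univ_pi fun _ => isCompact_Icc (a := (0:ℝ)) (b := 1))
    ?_ ?_
  · have : {π : Fin n → A → ℝ | ∀ j, IsDist (π j)}
        = ⋂ j, ((⋂ a, {π : Fin n → A → ℝ | 0 ≤ π j a}) ∩ {π | (∑ a, π j a) = 1}) := by
      ext π
      simp only [Set.mem_setOf_eq, Set.mem_iInter, Set.mem_inter_iff, IsDist]
    rw [this]
    refine isClosed_iInter fun j => IsClosed.inter ?_ ?_
    · exact isClosed_iInter fun a =>
        isClosed_le continuous_const ((continuous_apply a).comp (continuous_apply j))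
    · exact isClosed_eq
        (continuous_finset_sum _ fun a _ => (continuous_apply a).comp (continuous_apply j))
        continuous_const
  · intro π hπ
    simp only [Set.mem_pi, Set.mem_univ, forall_true_left, Set.mem_Icc]
    intro j a
    refine ⟨(hπ j).1 a, ?_⟩
    calc π j a ≤ ∑ a', π j a' :=
          Finset.single_le_sum (fun a' _ => (hπ j).1 a') (Finset.mem_univ a)
      _ = 1 := (hπ j).2

lemma exists_unif (D : DP S A n) (hterm : D.Terminates) :
    ∃ c : ℝ, 0 ≤ c ∧ ∀ π : Fin n → A → ℝ, (∀ j, IsDist (π j)) →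
      ∀ T, ∑ t ∈ Finset.range T, nrm (Qm D π ^ t) ≤ c := by
  have hS : Nonempty S := nonempty_S D
  have hex : ∀ p : {π : Fin n → A → ℝ // ∀ j, IsDist (π j)},
      ∃ t : ℕ, 1 ≤ t ∧ nrm (Qm D p.1 ^ t) < 1/2 := by
    intro p
    have htd := tendsto_nrm_pow p.2 hterm
    have hev := (htd.eventually_lt_const (by norm_num : (0:ℝ) < 1/2)).and
      (Filter.eventually_ge_atTop 1)
    obtain ⟨t, ht1, ht2⟩ := hev.exists
    exact ⟨t, ht2, ht1⟩
  choose tf htf1 htf2 using hex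
  have hK := isCompact_K n A
  let U : {π : Fin n → A → ℝ // ∀ j, IsDist (π j)} → Set (Fin n → A → ℝ) :=
    fun p => {π | nrm (Qm D π ^ tf p) < 1/2}
  have hUopen : ∀ p, IsOpen (U p) := fun p =>
    isOpen_lt (continuous_nrm_pow D (tf p)) continuous_const
  have hcover : {π : Fin n → A → ℝ | ∀ j, IsDist (π j)} ⊆ ⋃ p, U p := by
    intro π hπ
    exact Set.mem_iUnion.2 ⟨⟨π, hπ⟩, htf2 ⟨π, hπ⟩⟩
  obtain ⟨I, hI⟩ := hK.elim_finite_subcover U hUopen hcover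
  refine ⟨∑ p ∈ I, (Fintype.card S : ℝ) ^ (tf p + 2) * (2 * tf p), ?_, ?_⟩
  · exact Finset.sum_nonneg fun p _ => by positivity
  · intro π hπ T
    have hmem : π ∈ ⋃ p ∈ I, U p := hI hπ
    simp only [Set.mem_iUnion] at hmem
    obtain ⟨p, hpI, hp⟩ := hmem
    refine le_trans (sum_nrm_pow_le hS hπ (htf1 p) (le_of_lt hp) T) ?_
    exact Finset.single_le_sum (f := fun p => (Fintype.card S:ℝ) ^ (tf p + 2) * (2 * (tf p:ℝ)))
      (fun q _ => by positivity) hpI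

lemma nrm_add_le (M N : Matrix S S ℝ) : nrm (M + N) ≤ nrm M + nrm N := by
  unfold nrm
  rw [← Finset.sum_add_distrib]
  refine Finset.sum_le_sum fun s _ => ?_
  rw [← Finset.sum_add_distrib]
  refine Finset.sum_le_sum fun s' _ => ?_
  exact abs_add_le _ _

lemma nrm_zero : nrm (0 : Matrix S S ℝ) = 0 := by
  simp [nrm]

lemma pow_sub_pow_eq (Q Q' : Matrix S S ℝ) :
    ∀ t : ℕ, Q ^ (t+1) - Q' ^ (t+1)
      = ∑ p ∈ Finset.HasAntidiagonal.antidiagonal t, Q' ^ p.1 * (Q - Q') * Q ^ p.2 := by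
  intro t
  induction t with
  | zero =>
    simp
  | succ t ih =>
    calc Q ^ (t+2) - Q' ^ (t+2)
        = Q' * (Q ^ (t+1) - Q' ^ (t+1)) + (Q - Q') * Q ^ (t+1) := by
          rw [pow_succ' Q (t+1), pow_succ' Q' (t+1)]
          noncomm_ring
      _ = (∑ p ∈ Finset.HasAntidiagonal.antidiagonal t, Q' * (Q' ^ p.1 * (Q - Q') * Q ^ p.2))
            + (Q - Q') * Q ^ (t+1) := by
          rw [ih, Finset.mul_sum]
      _ = ∑ p ∈ Finset.HasAntidiagonal.antidiagonal (t+1), Q' ^ p.1 * (Q - Q') * Q ^ p.2 := by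
          rw [Finset.Nat.sum_antidiagonal_succ
            (f := fun p => Q' ^ p.1 * (Q - Q') * Q ^ p.2)]
          rw [add_comm]
          congr 1
          · rw [pow_zero, one_mul]
          · refine Finset.sum_congr rfl fun p _ => ?_
            rw [pow_succ' Q' p.1]
            noncomm_ring

lemma pow_sub_pow_nrm_le (Q Q' : Matrix S S ℝ) (t : ℕ) :
    nrm (Q ^ (t+1) - Q' ^ (t+1))
      ≤ nrm (Q - Q') * ∑ p ∈ Finset.HasAntidiagonal.antidiagonal t, nrm (Q' ^ p.1) * nrm (Q ^ p.2) := by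
  rw [pow_sub_pow_eq Q Q' t]
  refine le_trans (nrm_sum_le _ _) ?_
  rw [Finset.mul_sum]
  refine Finset.sum_le_sum fun p _ => ?_
  calc nrm (Q' ^ p.1 * (Q - Q') * Q ^ p.2)
      ≤ nrm (Q' ^ p.1 * (Q - Q')) * nrm (Q ^ p.2) := nrm_mul_le _ _
    _ ≤ (nrm (Q' ^ p.1) * nrm (Q - Q')) * nrm (Q ^ p.2) :=
        mul_le_mul_of_nonneg_right (nrm_mul_le _ _) (nrm_nonneg _)
    _ = nrm (Q - Q') * (nrm (Q' ^ p.1) * nrm (Q ^ p.2)) := by ring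

lemma conv_le (a b : ℕ → ℝ) (ha : ∀ k, 0 ≤ a k) (hb : ∀ k, 0 ≤ b k) (T : ℕ) :
    ∑ t ∈ Finset.range T, ∑ p ∈ Finset.HasAntidiagonal.antidiagonal t, a p.1 * b p.2
      ≤ (∑ k ∈ Finset.range T, a k) * (∑ m ∈ Finset.range T, b m) := by
  have hdisj : (↑(Finset.range T) : Set ℕ).PairwiseDisjoint Finset.HasAntidiagonal.antidiagonal := by
    intro x _ y _ hxy
    rw [Function.onFun, Finset.disjoint_left]
    intro p hp hp'
    rw [Finset.HasAntidiagonal.mem_antidiagonal] at hp hp'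
    exact hxy (hp ▸ hp')
  rw [← Finset.sum_biUnion hdisj]
  have hsub : (Finset.range T).biUnion Finset.HasAntidiagonal.antidiagonal
      ⊆ Finset.range T ×ˢ Finset.range T := by
    intro p hp
    simp only [Finset.mem_biUnion, Finset.mem_range] at hp
    obtain ⟨t, ht, hp⟩ := hp
    rw [Finset.HasAntidiagonal.mem_antidiagonal] at hp
    simp only [Finset.mem_product, Finset.mem_range]
    omega
  calc ∑ p ∈ (Finset.range T).biUnion Finset.HasAntidiagonal.antidiagonal, a p.1 * b p.2
      ≤ ∑ p ∈ Finset.range T ×ˢ Finset.range T, a p.1 * b p.2 :=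
        Finset.sum_le_sum_of_subset_of_nonneg hsub
          (fun p _ _ => mul_nonneg (ha p.1) (hb p.2))
    _ = (∑ k ∈ Finset.range T, a k) * (∑ m ∈ Finset.range T, b m) := by
        rw [Finset.sum_mul_sum, Finset.sum_product]

lemma main_nrm_diff (Q Q' : Matrix S S ℝ) (T : ℕ) :
    nrm ((∑ t ∈ Finset.range (T+1), Q ^ t) - ∑ t ∈ Finset.range (T+1), Q' ^ t)
      ≤ nrm (Q - Q') * ((∑ t ∈ Finset.range (T+1), nrm (Q' ^ t))
          * (∑ t ∈ Finset.range (T+1), nrm (Q ^ t))) := by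
  have hd0 : 0 ≤ nrm (Q - Q') := nrm_nonneg _
  calc nrm ((∑ t ∈ Finset.range (T+1), Q ^ t) - ∑ t ∈ Finset.range (T+1), Q' ^ t)
      = nrm (∑ t ∈ Finset.range (T+1), (Q ^ t - Q' ^ t)) := by
        rw [Finset.sum_sub_distrib]
    _ ≤ ∑ t ∈ Finset.range (T+1), nrm (Q ^ t - Q' ^ t) := nrm_sum_le _ _
    _ = ∑ t ∈ Finset.range T, nrm (Q ^ (t+1) - Q' ^ (t+1)) := by
        rw [Finset.sum_range_succ' (fun t => nrm (Q ^ t - Q' ^ t)) T]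
        simp [nrm_zero]
    _ ≤ ∑ t ∈ Finset.range T, nrm (Q - Q')
          * ∑ p ∈ Finset.HasAntidiagonal.antidiagonal t, nrm (Q' ^ p.1) * nrm (Q ^ p.2) :=
        Finset.sum_le_sum fun t _ => pow_sub_pow_nrm_le Q Q' t
    _ = nrm (Q - Q') * ∑ t ∈ Finset.range T,
          ∑ p ∈ Finset.HasAntidiagonal.antidiagonal t, nrm (Q' ^ p.1) * nrm (Q ^ p.2) := by
        rw [Finset.mul_sum]
    _ ≤ nrm (Q - Q') * ((∑ t ∈ Finset.range T, nrm (Q' ^ t))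
          * (∑ t ∈ Finset.range T, nrm (Q ^ t))) := by
        refine mul_le_mul_of_nonneg_left ?_ hd0
        exact conv_le _ _ (fun k => nrm_nonneg _) (fun k => nrm_nonneg _) T
    _ ≤ nrm (Q - Q') * ((∑ t ∈ Finset.range (T+1), nrm (Q' ^ t))
          * (∑ t ∈ Finset.range (T+1), nrm (Q ^ t))) := by
        refine mul_le_mul_of_nonneg_left ?_ hd0
        refine mul_le_mul ?_ ?_ ?_ ?_
        · exact Finset.sum_le_sum_of_subset_of_nonneg
            (Finset.range_subset_range.2 (by omega)) (fun t _ _ => nrm_nonneg _)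
        · exact Finset.sum_le_sum_of_subset_of_nonneg
            (Finset.range_subset_range.2 (by omega)) (fun t _ _ => nrm_nonneg _)
        · exact Finset.sum_nonneg fun t _ => nrm_nonneg _
        · exact Finset.sum_nonneg fun t _ => nrm_nonneg _

lemma nrm_Qm_sub_le {π π' : Fin n → A → ℝ} :
    nrm (Qm D π - Qm D π')
      ≤ (Fintype.card S : ℝ) * ∑ j, ∑ a, |π j a - π' j a| := by
  have hd0 : 0 ≤ ∑ j, ∑ a, |π j a - π' j a| :=
    Finset.sum_nonneg fun j _ => Finset.sum_nonneg fun a _ => abs_nonneg _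
  unfold nrm
  have hrow : ∀ s : S, ∑ s', |(Qm D π - Qm D π') s s'| ≤ ∑ j, ∑ a, |π j a - π' j a| := by
    intro s
    by_cases h : D.isTerminal s
    · have : ∀ s', (Qm D π - Qm D π') s s' = 0 := by
        intro s'
        simp [Qm, h]
      rw [Finset.sum_congr rfl fun s' _ => by rw [this s', abs_zero]]
      simpa using hd0
    · have hentry : ∀ s', (Qm D π - Qm D π') s s'
          = ∑ a, (π (D.idx s) a - π' (D.idx s) a) * D.tr s a s' := by
        intro s'
        simp only [Matrix.sub_apply, Qm, Matrix.of_apply, if_neg h]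
        unfold DP.step DP.Tpol
        rw [← Finset.sum_sub_distrib]
        exact Finset.sum_congr rfl fun a _ => by ring
      calc ∑ s', |(Qm D π - Qm D π') s s'|
          ≤ ∑ s', ∑ a, |π (D.idx s) a - π' (D.idx s) a| * D.tr s a s' := by
            refine Finset.sum_le_sum fun s' _ => ?_
            rw [hentry s']
            refine le_trans (Finset.abs_sum_le_sum_abs _ _) ?_
            refine Finset.sum_le_sum fun a _ => ?_
            rw [abs_mul, abs_of_nonneg (D.tr_nonneg s a s')]
        _ = ∑ a, |π (D.idx s) a - π' (D.idx s) a| := by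
            rw [Finset.sum_comm]
            refine Finset.sum_congr rfl fun a _ => ?_
            rw [← Finset.mul_sum, D.tr_sum s a, mul_one]
        _ ≤ ∑ j, ∑ a, |π j a - π' j a| :=
            Finset.single_le_sum (f := fun j => ∑ a, |π j a - π' j a|)
              (fun j _ => Finset.sum_nonneg fun a _ => abs_nonneg _) (Finset.mem_univ _)
  calc ∑ s : S, ∑ s', |(Qm D π - Qm D π') s s'|
      ≤ ∑ s : S, ∑ j, ∑ a, |π j a - π' j a| := Finset.sum_le_sum fun s _ => hrow s
    _ = (Fintype.card S : ℝ) * ∑ j, ∑ a, |π j a - π' j a| := by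
        rw [Finset.sum_const, Finset.card_univ, nsmul_eq_mul]

end S15

open S15 Matrix in
/-- Corollary: the ex ante expected utility is Lipschitz-like in the joint
dependant policy. For every terminating decision problem there is `λ ≥ 0` such that for all
joint dependant policies `π, π' ∈ Δ(A)^n` with `‖π − π'‖₁ < 1`,
`|E[u|π] − E[u|π']| ≤ λ ‖π − π'‖₁ / (1 − ‖π − π'‖₁)`. -/
theorem stmt15 {S A : Type} [Fintype S] [Fintype A] [DecidableEq S] {n : ℕ}
    (D : DP S A n) (hterm : D.Terminates) :
    ∃ lam : ℝ, 0 ≤ lam ∧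
      ∀ π π' : Fin n → A → ℝ, (∀ j, IsDist (π j)) → (∀ j, IsDist (π' j)) →
        (∑ j, ∑ a, |π j a - π' j a|) < 1 →
        |D.EUj D.P0 π - D.EUj D.P0 π'| ≤
          lam * (∑ j, ∑ a, |π j a - π' j a|) / (1 - ∑ j, ∑ a, |π j a - π' j a|) := by
  classical
  obtain ⟨c, hc0, hc⟩ := exists_unif D hterm
  have hS : Nonempty S := nonempty_S D
  set Cu : ℝ := ∑ s, |D.u s| with hCu
  have hCu0 : 0 ≤ Cu := Finset.sum_nonneg fun s _ => abs_nonneg _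
  refine ⟨(Fintype.card S : ℝ) * Cu * (c * c), by positivity, ?_⟩
  intro π π' hπ hπ' hd
  set d : ℝ := ∑ j, ∑ a, |π j a - π' j a| with hdd
  have hd0 : 0 ≤ d := Finset.sum_nonneg fun j _ => Finset.sum_nonneg fun a _ => abs_nonneg _
  set fu : List S → ℝ := fun l => (l.getLast?.map D.u).getD 0 with hfu
  have hfub : ∀ l, |fu l| ≤ Cu := by
    intro l
    cases h : l.getLast? with
    | none => simp [hfu, h, hCu0]
    | some s =>
      simp only [hfu, h, Option.map_some, Option.getD_some]
      exact Finset.single_le_sum (f := fun s => |D.u s|)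
        (fun s _ => abs_nonneg _) (Finset.mem_univ s)
  have hfl : ∀ (a : S) (l : List S), l ≠ [] → fu (a :: l) = fu l := by
    intro a l h
    simp only [hfu]
    exact hf_last D.u a l h
  have hsum1 : Summable (gval D π D.P0 fu) := summable_gval hπ hterm D.P0 hfub
  have hsum2 : Summable (gval D π' D.P0 fu) := summable_gval hπ' hterm D.P0 hfub
  have hEU1 : D.EUj D.P0 π = D.lval D.P0 π fu := by rw [hfu]; rfl
  have hEU2 : D.EUj D.P0 π' = D.lval D.P0 π' fu := by rw [hfu]; rfl
  have h1 : Filter.Tendsto (fun T => FT D π D.P0 fu T) Filter.atTop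
      (nhds (D.lval D.P0 π fu)) := tendsto_FT hsum1
  have h2 : Filter.Tendsto (fun T => FT D π' D.P0 fu T) Filter.atTop
      (nhds (D.lval D.P0 π' fu)) := tendsto_FT hsum2
  have hdiff : Filter.Tendsto
      (fun T => |FT D π D.P0 fu T - FT D π' D.P0 fu T|) Filter.atTop
      (nhds (|D.lval D.P0 π fu - D.lval D.P0 π' fu|)) := (h1.sub h2).abs
  have hb : ∀ T, |FT D π D.P0 fu T - FT D π' D.P0 fu T|
      ≤ ((Fintype.card S : ℝ) * Cu * (c * c)) * d := by
    intro T
    rw [FT_eq hfl T D.P0, FT_eq hfl T D.P0]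
    have hcomb : (∑ s, D.P0 s * ((∑ t ∈ Finset.range (T+1), Qm D π ^ t) *ᵥ vf D fu) s)
        - (∑ s, D.P0 s * ((∑ t ∈ Finset.range (T+1), Qm D π' ^ t) *ᵥ vf D fu) s)
        = ∑ s, D.P0 s * ((((∑ t ∈ Finset.range (T+1), Qm D π ^ t)
            - (∑ t ∈ Finset.range (T+1), Qm D π' ^ t)) *ᵥ vf D fu) s) := by
      rw [← Finset.sum_sub_distrib]
      refine Finset.sum_congr rfl fun s _ => ?_
      rw [Matrix.sub_mulVec]
      simp [mul_sub]
    rw [hcomb]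
    have hP0 : ∑ s, |D.P0 s| ≤ 1 := by
      rw [Finset.sum_congr rfl fun s _ => abs_of_nonneg (D.P0_nonneg s), D.P0_sum]
    have hvf : ∀ s, |vf D fu s| ≤ Cu := by
      intro s
      unfold vf
      split
      · exact hfub [s]
      · simpa using hCu0
    refine le_trans (abs_dot_mulVec _ D.P0 _ hP0 hvf hCu0) ?_
    have hmn := main_nrm_diff (Qm D π) (Qm D π') T
    have ha1 : ∑ t ∈ Finset.range (T+1), nrm (Qm D π' ^ t) ≤ c := hc π' hπ' (T+1)
    have ha2 : ∑ t ∈ Finset.range (T+1), nrm (Qm D π ^ t) ≤ c := hc π hπ (T+1)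
    have hs1 : 0 ≤ ∑ t ∈ Finset.range (T+1), nrm (Qm D π' ^ t) :=
      Finset.sum_nonneg fun t _ => nrm_nonneg _
    have hs2 : 0 ≤ ∑ t ∈ Finset.range (T+1), nrm (Qm D π ^ t) :=
      Finset.sum_nonneg fun t _ => nrm_nonneg _
    have hsub : nrm (Qm D π - Qm D π') ≤ (Fintype.card S : ℝ) * d := by
      rw [hdd]
      exact nrm_Qm_sub_le
    have hnn : nrm ((∑ t ∈ Finset.range (T+1), Qm D π ^ t)
          - ∑ t ∈ Finset.range (T+1), Qm D π' ^ t)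
        ≤ ((Fintype.card S : ℝ) * d) * (c * c) := by
      refine le_trans hmn ?_
      refine mul_le_mul hsub ?_ ?_ (by positivity)
      · exact mul_le_mul ha1 ha2 hs2 hc0
      · exact mul_nonneg hs1 hs2
    calc 1 * (nrm ((∑ t ∈ Finset.range (T+1), Qm D π ^ t)
            - ∑ t ∈ Finset.range (T+1), Qm D π' ^ t) * Cu)
        ≤ 1 * ((((Fintype.card S : ℝ) * d) * (c * c)) * Cu) := by
          refine mul_le_mul_of_nonneg_left ?_ zero_le_one
          exact mul_le_mul_of_nonneg_right hnn hCu0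
      _ = ((Fintype.card S : ℝ) * Cu * (c * c)) * d := by ring
  have hfin : |D.EUj D.P0 π - D.EUj D.P0 π'|
      ≤ ((Fintype.card S : ℝ) * Cu * (c * c)) * d := by
    rw [hEU1, hEU2]
    exact le_of_tendsto hdiff (Filter.Eventually.of_forall hb)
  refine le_trans hfin ?_
  have h1d : 0 < 1 - d := by linarith
  rw [le_div_iff₀ h1d]
  have hlamd0 : 0 ≤ ((Fintype.card S : ℝ) * Cu * (c * c)) * d := by positivity
  nlinarith [mul_nonneg hlamd0 hd0]
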